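/- Let G be a simple connected graph and let v_i, v_j be adjacent vertices with degrees d_i, d_j. Then 𝓛E_G(v_i) · 𝓛E_G(v_j) ≥ 1/(d_i d_j) and 𝓛E_G(v_i) + 𝓛E_G(v_j) ≥ 2/√(d_i d_j). -/

import Mathlib

open Matrix BigOperators Finset

/-- The square root of a positive semidefinite matrix (as in the older Mathlib). -/
noncomputable def Matrix.PosSemidef.sqrt {n 𝕜 : Type*} [Fintype n] [DecidableEq n] [RCLike 𝕜]
    [PartialOrder 𝕜] [StarOrderedRing 𝕜]
    {A : Matrix n n 𝕜} (hA : A.PosSemidef) : Matrix n n 𝕜 :=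
  hA.1.eigenvectorUnitary.1 * diagonal ((↑) ∘ (√·) ∘ hA.1.eigenvalues) *
    (star hA.1.eigenvectorUnitary : Matrix n n 𝕜)

/-- The absolute value of a real matrix `B`, defined as `(B * Bᵀ)^(1/2)`. -/
noncomputable def matAbs {n : ℕ} (B : Matrix (Fin n) (Fin n) ℝ) : Matrix (Fin n) (Fin n) ℝ :=
  (Matrix.conjTranspose_eq_transpose_of_trivial B ▸
    Matrix.posSemidef_self_mul_conjTranspose B : (B * Bᵀ).PosSemidef).sqrt

/-- The (adjacency) energy of the vertex `i` of the graph `G`: `|A|_{ii}`. -/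
noncomputable def vertexEnergy {n : ℕ} (G : SimpleGraph (Fin n)) [DecidableRel G.Adj]
    (i : Fin n) : ℝ :=
  matAbs (G.adjMatrix ℝ) i i

/-- The Laplacian energy of the vertex `i` of the graph `G`: `(|L - (2m/n) I|)_{ii}`. -/
noncomputable def vertexLapEnergy {n : ℕ} (G : SimpleGraph (Fin n)) [DecidableRel G.Adj]
    (i : Fin n) : ℝ :=
  matAbs (G.lapMatrix ℝ - ((2 * (G.edgeFinset.card : ℝ)) / n) • 1) i i

/-- The normalized Laplacian `𝓛 = I - D^{-1/2} A D^{-1/2}` of the graph `G`. -/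
noncomputable def normLap {n : ℕ} (G : SimpleGraph (Fin n)) [DecidableRel G.Adj] :
    Matrix (Fin n) (Fin n) ℝ :=
  1 - Matrix.diagonal (fun i => (Real.sqrt (G.degree i))⁻¹) * G.adjMatrix ℝ *
      Matrix.diagonal (fun i => (Real.sqrt (G.degree i))⁻¹)

/-- The normalized Laplacian energy of the vertex `i` of the graph `G`: `(|𝓛 - I|)_{ii}`. -/
noncomputable def vertexNormLapEnergy {n : ℕ} (G : SimpleGraph (Fin n)) [DecidableRel G.Adj]
    (i : Fin n) : ℝ :=
  matAbs (normLap G - 1) i i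

lemma psd_diag_nonneg {n : ℕ} {P : Matrix (Fin n) (Fin n) ℝ} (hP : P.PosSemidef)
    (i : Fin n) : 0 ≤ P i i := by
  have h := hP.dotProduct_mulVec_nonneg (Pi.single i 1)
  simpa [Matrix.mulVec_single, single_dotProduct] using h

lemma psd_minor {n : ℕ} {P : Matrix (Fin n) (Fin n) ℝ} (hP : P.PosSemidef)
    (i j : Fin n) : (P i j) ^ 2 ≤ P i i * P j j := by
  rcases eq_or_ne i j with rfl | hij
  · rw [sq]
  have hsym : P j i = P i j := by
    have := hP.1.apply i j
    simpa using this
  have key : ∀ t : ℝ, 0 ≤ P i i * (t * t) + (2 * P i j) * t + P j j := by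
    intro t
    have h0 := hP.dotProduct_mulVec_nonneg (Pi.single i t + Pi.single j 1)
    simp only [star_trivial, Matrix.mulVec_add, Matrix.mulVec_single, dotProduct_add,
      add_dotProduct, single_dotProduct] at h0
    simp only [mul_one, one_mul, Pi.smul_apply, op_smul_eq_mul, Matrix.col_apply] at h0
    rw [hsym] at h0
    nlinarith [h0]
  have hd := discrim_le_zero key
  rw [discrim] at hd
  nlinarith [hd]

lemma matAbs_eq {n : ℕ} {M S : Matrix (Fin n) (Fin n) ℝ} (hS : S.PosSemidef)
    (hP : (M * Mᵀ).PosSemidef) (h : S ^ 2 = M * Mᵀ) : matAbs M = S :=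
  by
  open scoped MatrixOrder in
  have e : hP.sqrt = CFC.sqrt (M * Mᵀ) := by
    rw [CFC.sqrt_eq_cfc, cfc_nnreal_eq_real _ (M * Mᵀ), hP.1.cfc_eq]
    simp only [Matrix.PosSemidef.sqrt, IsHermitian.cfc, Unitary.conjStarAlgAut_apply]
    congr 3
    funext k
    simp [hP.eigenvalues_nonneg k]
  open scoped MatrixOrder in
  show hP.sqrt = S
  open scoped MatrixOrder in
  rw [e]
  open scoped MatrixOrder in
  exact CFC.sqrt_unique (by rw [← sq]; exact h) hS.nonneg

lemma matAbs_psd_sub {n : ℕ} {M : Matrix (Fin n) (Fin n) ℝ} (hM : M.IsHermitian) :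
    (matAbs M - M).PosSemidef ∧ (matAbs M + M).PosSemidef := by
  set U : Matrix (Fin n) (Fin n) ℝ := (hM.eigenvectorUnitary : Matrix (Fin n) (Fin n) ℝ) with hU
  have hspec : M = U * Matrix.diagonal (fun k => hM.eigenvalues k) * star U := by
    have := hM.spectral_theorem
    rw [Unitary.conjStarAlgAut_apply] at this
    exact this
  have hUU : star U * U = 1 := Unitary.coe_star_mul_self hM.eigenvectorUnitary
  have hMT : Mᵀ = M := by
    have := hM.eq
    rwa [Matrix.conjTranspose_eq_transpose_of_trivial] at this
  set S : Matrix (Fin n) (Fin n) ℝ := U * Matrix.diagonal (fun k => |hM.eigenvalues k|) * star U with hSdef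
  have hS : S.PosSemidef := by
    have hd : (Matrix.diagonal (fun k => |hM.eigenvalues k|)).PosSemidef :=
      Matrix.PosSemidef.diagonal (fun k => abs_nonneg _)
    have := hd.mul_mul_conjTranspose_same U
    rwa [← Matrix.star_eq_conjTranspose] at this
  have key : ∀ (D E : Matrix (Fin n) (Fin n) ℝ),
      (U * D * star U) * (U * E * star U) = U * (D * E) * star U := by
    intro D E
    calc (U * D * star U) * (U * E * star U) = U * (D * ((star U * U) * (E * star U))) := by
          noncomm_ring
      _ = U * (D * E) * star U := by rw [hUU]; noncomm_ring
  have hsq : S ^ 2 = M * Mᵀ := by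
    calc S ^ 2 = U * ((Matrix.diagonal fun k => |hM.eigenvalues k|) *
            (Matrix.diagonal fun k => |hM.eigenvalues k|)) * star U := by rw [sq, hSdef, key]
      _ = U * ((Matrix.diagonal fun k => hM.eigenvalues k) *
            (Matrix.diagonal fun k => hM.eigenvalues k)) * star U := by
          rw [Matrix.diagonal_mul_diagonal, Matrix.diagonal_mul_diagonal]
          congr 2
          ext k
          simp [abs_mul_abs_self]
      _ = ((U * (Matrix.diagonal fun k => hM.eigenvalues k) * star U) *
            (U * (Matrix.diagonal fun k => hM.eigenvalues k) * star U)) := (key _ _).symm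
      _ = M * M := by rw [← hspec]
      _ = M * Mᵀ := by rw [hMT]
  have habs : matAbs M = S := matAbs_eq hS
    (Matrix.conjTranspose_eq_transpose_of_trivial M ▸
      Matrix.posSemidef_self_mul_conjTranspose M) hsq
  constructor
  · have : matAbs M - M = U * Matrix.diagonal (fun k => |hM.eigenvalues k| - hM.eigenvalues k) * star U := by
      rw [habs, hSdef]
      nth_rewrite 2 [hspec]
      rw [← Matrix.sub_mul, ← Matrix.mul_sub, Matrix.diagonal_sub]
    rw [this]
    have hd : (Matrix.diagonal (fun k => |hM.eigenvalues k| - hM.eigenvalues k)).PosSemidef :=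
      Matrix.PosSemidef.diagonal (fun k => by simp [abs_nonneg, le_abs_self])
    have := hd.mul_mul_conjTranspose_same U
    rwa [← Matrix.star_eq_conjTranspose] at this
  · have : matAbs M + M = U * Matrix.diagonal (fun k => |hM.eigenvalues k| + hM.eigenvalues k) * star U := by
      rw [habs, hSdef]
      nth_rewrite 2 [hspec]
      rw [← Matrix.add_mul, ← Matrix.mul_add, Matrix.diagonal_add]
    rw [this]
    have hd : (Matrix.diagonal (fun k => |hM.eigenvalues k| + hM.eigenvalues k)).PosSemidef :=
      Matrix.PosSemidef.diagonal
        (fun k => by have := neg_abs_le (hM.eigenvalues k); simp only [Pi.zero_apply]; linarith)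
    have := hd.mul_mul_conjTranspose_same U
    rwa [← Matrix.star_eq_conjTranspose] at this

theorem stmt15 {n : ℕ} (G : SimpleGraph (Fin n)) [DecidableRel G.Adj]
    (hconn : G.Connected) (i j : Fin n) (hadj : G.Adj i j) :
    vertexNormLapEnergy G i * vertexNormLapEnergy G j ≥
        1 / ((G.degree i : ℝ) * (G.degree j : ℝ)) ∧
      vertexNormLapEnergy G i + vertexNormLapEnergy G j ≥
        2 / Real.sqrt ((G.degree i : ℝ) * (G.degree j : ℝ)) := by
  set f : Fin n → ℝ := fun k => (Real.sqrt (G.degree k))⁻¹ with hf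
  set M : Matrix (Fin n) (Fin n) ℝ := normLap G - 1 with hMdef
  have hNeg : M = -(Matrix.diagonal f * G.adjMatrix ℝ * Matrix.diagonal f) := by
    rw [hMdef, normLap]; abel
  have hM : M.IsHermitian := by
    rw [Matrix.IsHermitian, hNeg]
    simp [Matrix.conjTranspose_mul, Matrix.diagonal_conjTranspose, Matrix.mul_assoc]
  have hent : ∀ a b, (Matrix.diagonal f * G.adjMatrix ℝ * Matrix.diagonal f) a b
      = f a * (G.adjMatrix ℝ) a b * f b := by
    intro a b
    rw [Matrix.mul_diagonal, Matrix.diagonal_mul]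
  have hMij : M i j = -(f i * f j) := by
    rw [hNeg, Matrix.neg_apply, hent]
    simp [hadj]
  have hMii : M i i = 0 := by
    rw [hNeg, Matrix.neg_apply, hent]
    simp
  have hMjj : M j j = 0 := by
    rw [hNeg, Matrix.neg_apply, hent]
    simp
  obtain ⟨h1, h2⟩ := matAbs_psd_sub hM
  have p1 := psd_minor h1 i j
  have p2 := psd_minor h2 i j
  have ha := psd_diag_nonneg h1 i
  have hb := psd_diag_nonneg h1 j
  simp only [Matrix.sub_apply, Matrix.add_apply, hMii, hMjj, hMij, sub_zero, add_zero] at p1 p2 ha hb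
  set S : Matrix (Fin n) (Fin n) ℝ := matAbs M with hS
  -- degree positivity
  have hdi : (0 : ℝ) < G.degree i := by
    exact_mod_cast (G.degree_pos_iff_exists_adj i).mpr ⟨j, hadj⟩
  have hdj : (0 : ℝ) < G.degree j := by
    exact_mod_cast (G.degree_pos_iff_exists_adj j).mpr ⟨i, hadj.symm⟩
  have hfi : f i ^ 2 = ((G.degree i : ℝ))⁻¹ := by
    rw [hf]
    simp only
    rw [← Real.sqrt_inv, Real.sq_sqrt (by positivity)]
  have hfj : f j ^ 2 = ((G.degree j : ℝ))⁻¹ := by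
    rw [hf]
    simp only
    rw [← Real.sqrt_inv, Real.sq_sqrt (by positivity)]
  have hEi : vertexNormLapEnergy G i = S i i := rfl
  have hEj : vertexNormLapEnergy G j = S j j := rfl
  have hprod : S i i * S j j ≥ 1 / ((G.degree i : ℝ) * (G.degree j : ℝ)) := by
    have hm2 : (f i * f j) ^ 2 = 1 / ((G.degree i : ℝ) * (G.degree j : ℝ)) := by
      rw [mul_pow, hfi, hfj]
      field_simp
    nlinarith [p1, p2, hm2]
  refine ⟨by rw [hEi, hEj]; exact hprod, ?_⟩
  rw [hEi, hEj]
  set c : ℝ := Real.sqrt ((G.degree i : ℝ) * (G.degree j : ℝ)) with hc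
  have hcpos : 0 < c := Real.sqrt_pos.mpr (by positivity)
  have hcsq : c ^ 2 = (G.degree i : ℝ) * (G.degree j : ℝ) := Real.sq_sqrt (by positivity)
  have hkey : 1 ≤ S i i * S j j * c ^ 2 := by
    rw [hcsq]
    rw [ge_iff_le, div_le_iff₀ (by positivity)] at hprod
    linarith
  rw [ge_iff_le, div_le_iff₀ hcpos]
  nlinarith [sq_nonneg ((S i i - S j j) * c), sq_nonneg ((S i i + S j j) * c - 2),
    mul_nonneg (mul_nonneg (add_nonneg ha hb) hcpos.le) hcpos.le, hkey,
    mul_nonneg (add_nonneg ha hb) hcpos.le]
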